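/- Let R be a ring, G a finite group of order n with listing g_1, …, g_n, and y, v ∈ RG with RG-matrices Y = σ(y) and V = σ(v). Let ȳ denote the first row of Y (the row indexed by g_1). Then YV = 0 as matrices if and only if the row vector ȳV = 0. -/

import Mathlib

/-- The `RG`-matrix of an element `w` of the group ring `RG`, relative to a
listing `g : Fin n ≃ G` of the elements of `G`. -/
noncomputable def rgMatrix {R : Type*} [Semiring R] {G : Type*} [Group G] {n : ℕ}
    (g : Fin n ≃ G) (w : MonoidAlgebra R G) : Matrix (Fin n) (Fin n) R :=
  Matrix.of fun i j => w.coeff ((g i)⁻¹ * g j)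

/-- for `y, v ∈ RG` with `Y = σ(y)`, `V = σ(v)`, and `ȳ` the first row
of `Y` (the row indexed by `g_1`), one has `Y * V = 0` iff `ȳ ᵥ* V = 0`. -/
theorem stmt6 {R : Type*} [Ring R] {G : Type*} [Group G] {n : ℕ} [NeZero n]
    (g : Fin n ≃ G) (y v : MonoidAlgebra R G) :
    rgMatrix g y * rgMatrix g v = 0 ↔
      Matrix.vecMul (rgMatrix g y 0) (rgMatrix g v) = 0 := by
  constructor
  · intro h
    ext j
    have := congrFun (congrFun h 0) j
    simpa [Matrix.vecMul, Matrix.mul_apply, dotProduct] using this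
  · intro h
    ext i j
    have key := congrFun h (g.symm (g 0 * (g i)⁻¹ * g j))
    simp only [Matrix.vecMul, dotProduct, Matrix.mul_apply, rgMatrix,
      Matrix.of_apply, Pi.zero_apply, Matrix.zero_apply, Equiv.apply_symm_apply] at key ⊢
    rw [← key]
    apply Fintype.sum_equiv (g.trans ((Equiv.mulLeft (g 0 * (g i)⁻¹)).trans g.symm))
    intro k
    simp only [Equiv.trans_apply, Equiv.coe_mulLeft, Equiv.apply_symm_apply]
    congr 1 <;> group
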